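/- Let 0 < α < 1 and let u, h : [x₁, x₂] → ℝ be continuous and strictly positive. Then the function ε ↦ ∫_{x₁}^{x₂} ∫_{−u(x)/h(x)}^{ε} u(x)^(2−2α)·h(x)^(2α)·(t + u(x)/h(x))^(2α)·(ε−t)^(−α) dt dx is differentiable at every ε ≥ 0, and (1/Γ(1−α)) times its derivative at ε equals (Γ(2α+1)/Γ(α+1)) · ∫_{x₁}^{x₂} u(x)^(2−2α)·h(x)^(2α)·(ε + u(x)/h(x))^α dx; in particular, at ε = 0 this value equals (Γ(2α+1)/Γ(α+1)) · ∫_{x₁}^{x₂} u(x)^(2−α)·h(x)^α dx. (This is the fractional Gateaux variation δ^α F[u] of the functional F[u] = ∫_{x₁}^{x₂} u(x)² dx, since F[u^(1−α)·(u+εh)^α] = ∫_{x₁}^{x₂} u^(2−2α)·h^(2α)·(ε + u/h)^(2α) dx.) -/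

import Mathlib

open MeasureTheory intervalIntegral Set

lemma beta_real {a b : ℝ} (ha : 0 < a) (hb : 0 < b) :
    ∫ x in (0:ℝ)..1, x ^ (a-1) * (1-x) ^ (b-1)
      = Real.Gamma a * Real.Gamma b / Real.Gamma (a+b) := by
  have key := Complex.Gamma_mul_Gamma_eq_betaIntegral (s := (a:ℂ)) (t := (b:ℂ))
    (by simpa using ha) (by simpa using hb)
  have hbeta : Complex.betaIntegral a b
      = ((∫ x in (0:ℝ)..1, x ^ (a-1) * (1-x) ^ (b-1) : ℝ) : ℂ) := by
    rw [Complex.betaIntegral, ← intervalIntegral.integral_ofReal]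
    apply intervalIntegral.integral_congr
    intro x hx
    rw [Set.uIcc_of_le (by norm_num : (0:ℝ) ≤ 1)] at hx
    obtain ⟨hx0, hx1⟩ := hx
    push_cast
    rw [Complex.ofReal_cpow hx0, Complex.ofReal_cpow (by linarith : (0:ℝ) ≤ 1 - x)]
    push_cast
    ring
  rw [hbeta, ← Complex.ofReal_add, Complex.Gamma_ofReal, Complex.Gamma_ofReal,
    Complex.Gamma_ofReal, ← Complex.ofReal_mul, ← Complex.ofReal_mul] at key
  have := Complex.ofReal_inj.mp key
  have hG : Real.Gamma (a+b) ≠ 0 := (Real.Gamma_pos_of_pos (by linarith)).ne'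
  field_simp
  linarith [this]

lemma inner_int {α s c : ℝ} (hα0 : 0 < α) (hα1 : α < 1) (hsc : 0 < s + c) :
    ∫ t in (-c)..s, (t+c) ^ (2*α) * (s-t) ^ (-α)
      = (s+c) ^ (α+1) * (Real.Gamma (2*α+1) * Real.Gamma (1-α) / Real.Gamma (α+2)) := by
  set p := s + c with hp
  have hp0 : p ≠ 0 := hsc.ne'
  have hcomp := intervalIntegral.integral_comp_mul_add
    (a := (0:ℝ)) (b := 1) (f := fun t => (t+c) ^ (2*α) * (s-t) ^ (-α)) hp0 (-c)
  simp only [mul_zero, zero_add, mul_one, smul_eq_mul] at hcomp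
  have hend : p * 1 + -c = s := by rw [hp]; ring
  have hstart : p * 0 + -c = -c := by ring
  have key : ∫ t in (-c)..s, (t+c) ^ (2*α) * (s-t) ^ (-α)
      = p * ∫ x in (0:ℝ)..1, (p*x + -c + c) ^ (2*α) * (s - (p*x + -c)) ^ (-α) := by
    rw [hcomp]
    rw [show p + -c = s from by rw [hp]; ring]
    field_simp
  rw [key]
  have hcongr : ∫ x in (0:ℝ)..1, (p*x + -c + c) ^ (2*α) * (s - (p*x + -c)) ^ (-α)
      = p ^ α * ∫ x in (0:ℝ)..1, x ^ ((2*α+1)-1) * (1-x) ^ ((1-α)-1) := by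
    rw [← intervalIntegral.integral_const_mul]
    apply intervalIntegral.integral_congr
    intro x hx
    rw [Set.uIcc_of_le (by norm_num : (0:ℝ) ≤ 1)] at hx
    obtain ⟨hx0, hx1⟩ := hx
    dsimp only
    have h1 : p*x + -c + c = p * x := by ring
    have h2 : s - (p*x + -c) = p * (1 - x) := by rw [hp]; ring
    rw [h1, h2, Real.mul_rpow hsc.le hx0, Real.mul_rpow hsc.le (by linarith)]
    rw [show (2*α+1)-1 = 2*α from by ring, show (1-α)-1 = -α from by ring]
    rw [show p ^ (2*α) * x ^ (2*α) * (p ^ (-α) * (1-x) ^ (-α))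
        = (p ^ (2*α) * p ^ (-α)) * (x ^ (2*α) * (1-x) ^ (-α)) from by ring]
    rw [← Real.rpow_add hsc]
    ring_nf
  rw [hcongr, beta_real (by linarith) (by linarith)]
  rw [show 2*α+1+(1-α) = α + 2 from by ring]
  rw [← mul_assoc, show p * p ^ α = p ^ (α+1) from by rw [Real.rpow_add_one hp0]; ring]

open MeasureTheory intervalIntegral Set Metric

lemma deriv_aux {x₁ x₂ : ℝ} (h12 : x₁ ≤ x₂) {w c : ℝ → ℝ}
    (hw : ContinuousOn w (Set.Icc x₁ x₂)) (hc : ContinuousOn c (Set.Icc x₁ x₂))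
    {α : ℝ} (hα0 : 0 < α) (ε : ℝ) :
    HasDerivAt (fun s : ℝ => ∫ x in x₁..x₂, w x * (s + c x) ^ (α+1))
      ((α+1) * ∫ x in x₁..x₂, w x * (ε + c x) ^ α) ε := by
  -- bounds for |w| and |c| on the interval
  obtain ⟨W, hW⟩ : ∃ W : ℝ, ∀ x ∈ Set.Icc x₁ x₂, |w x| ≤ W := by
    obtain ⟨y, hy, hmax⟩ := isCompact_Icc.exists_isMaxOn (Set.nonempty_Icc.mpr h12) hw.abs
    exact ⟨|w y|, fun x hx => hmax hx⟩
  obtain ⟨M, hM⟩ : ∃ M : ℝ, ∀ x ∈ Set.Icc x₁ x₂, |c x| ≤ M := by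
    obtain ⟨y, hy, hmax⟩ := isCompact_Icc.exists_isMaxOn (Set.nonempty_Icc.mpr h12) hc.abs
    exact ⟨|c y|, fun x hx => hmax hx⟩
  have hsub : Set.uIoc x₁ x₂ ⊆ Set.Icc x₁ x₂ := by
    rw [Set.uIoc_of_le h12]; exact Set.Ioc_subset_Icc_self
  have hsub' : Set.uIcc x₁ x₂ ⊆ Set.Icc x₁ x₂ := by rw [Set.uIcc_of_le h12]
  have hWnn : 0 ≤ W := le_trans (abs_nonneg _) (hW x₁ (by simp [h12]))
  have hcont : ∀ s : ℝ, ContinuousOn (fun x => w x * (s + c x) ^ (α+1)) (Set.Icc x₁ x₂) :=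
    fun s => hw.mul ((continuousOn_const.add hc).rpow_const
      (fun x hx => Or.inr (by linarith)))
  have hcont' : ContinuousOn (fun x => (α+1) * (w x * (ε + c x) ^ α)) (Set.Icc x₁ x₂) :=
    continuousOn_const.mul (hw.mul ((continuousOn_const.add hc).rpow_const
      (fun x hx => Or.inr hα0.le)))
  have key := intervalIntegral.hasDerivAt_integral_of_dominated_loc_of_deriv_le
    (μ := volume) (a := x₁) (b := x₂) (x₀ := ε) (s := Metric.ball ε 1)
    (F := fun s x => w x * (s + c x) ^ (α+1))
    (F' := fun s x => (α+1) * (w x * (s + c x) ^ α))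
    (bound := fun _ => (α+1) * (W * (|ε| + 1 + M) ^ α))
    (Metric.ball_mem_nhds ε one_pos)
    (Filter.Eventually.of_forall fun s =>
      ((hcont s).mono hsub).aestronglyMeasurable measurableSet_uIoc)
    ((hcont ε).mono hsub').intervalIntegrable
    ((hcont'.mono hsub).aestronglyMeasurable measurableSet_uIoc)
    (Filter.Eventually.of_forall fun t ht s hs => by
      have htI := hsub ht
      have h1 : |w t| ≤ W := hW t htI
      have h2 : |(s + c t) ^ α| ≤ (|ε| + 1 + M) ^ α := by
        refine le_trans (Real.abs_rpow_le_abs_rpow _ _) ?_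
        apply Real.rpow_le_rpow (abs_nonneg _) _ hα0.le
        have : |s| ≤ |ε| + 1 := by
          have := abs_sub_abs_le_abs_sub s ε
          have hd : |s - ε| < 1 := by simpa [Real.dist_eq] using hs
          linarith
        calc |s + c t| ≤ |s| + |c t| := abs_add_le _ _
          _ ≤ |ε| + 1 + M := by linarith [hM t htI]
      calc ‖(α+1) * (w t * (s + c t) ^ α)‖
          = (α+1) * (|w t| * |(s + c t) ^ α|) := by
            rw [Real.norm_eq_abs, abs_mul, abs_mul, abs_of_pos (by linarith : (0:ℝ) < α+1)]
        _ ≤ (α+1) * (W * (|ε| + 1 + M) ^ α) := by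
            apply mul_le_mul_of_nonneg_left _ (by linarith)
            exact mul_le_mul h1 h2 (abs_nonneg _) hWnn)
    intervalIntegrable_const
    (Filter.Eventually.of_forall fun t ht s hs => by
      have hbase : HasDerivAt (fun s : ℝ => s + c t) 1 s := (hasDerivAt_id s).add_const _
      have hpow := (Real.hasDerivAt_rpow_const (x := s + c t) (p := α+1)
        (Or.inr (by linarith))).comp s hbase
      have := hpow.const_mul (w t)
      convert this using 1
      · rfl
      · rfl
      rw [show α + 1 - 1 = α from by ring]
      ring)
  have h2 := key.2
  rwa [intervalIntegral.integral_const_mul] at h2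

/-- The fractional Gateaux variation `δ^α F[u]` of the functional
`F[u] = ∫_{x₁}^{x₂} u(x)² dx`: for every `ε ≥ 0` the function
`s ↦ ∫_{x₁}^{x₂} ∫_{-u/h}^{s} u^(2-2α) h^(2α) (t + u/h)^(2α) (s-t)^(-α) dt dx`
is differentiable, `1/Γ(1-α)` times its derivative at `ε` equals
`(Γ(2α+1)/Γ(α+1)) ∫ u^(2-2α) h^(2α) (ε + u/h)^α dx`, and at `ε = 0` this value is
`(Γ(2α+1)/Γ(α+1)) ∫ u^(2-α) h^α dx`. -/
theorem stmt_11 (α x₁ x₂ : ℝ) (hα0 : 0 < α) (hα1 : α < 1) (h12 : x₁ ≤ x₂)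
    (u h : ℝ → ℝ)
    (hu : ContinuousOn u (Set.Icc x₁ x₂)) (hh : ContinuousOn h (Set.Icc x₁ x₂))
    (hupos : ∀ x ∈ Set.Icc x₁ x₂, 0 < u x) (hhpos : ∀ x ∈ Set.Icc x₁ x₂, 0 < h x) :
    (∀ ε : ℝ, 0 ≤ ε →
      DifferentiableAt ℝ
        (fun s : ℝ => ∫ x in x₁..x₂, ∫ t in (-(u x / h x))..s,
          u x ^ (2 - 2 * α) * h x ^ (2 * α) * (t + u x / h x) ^ (2 * α) * (s - t) ^ (-α)) ε ∧
      (1 / Real.Gamma (1 - α)) *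
          deriv (fun s : ℝ => ∫ x in x₁..x₂, ∫ t in (-(u x / h x))..s,
            u x ^ (2 - 2 * α) * h x ^ (2 * α) * (t + u x / h x) ^ (2 * α) * (s - t) ^ (-α)) ε
        = (Real.Gamma (2 * α + 1) / Real.Gamma (α + 1)) *
            ∫ x in x₁..x₂, u x ^ (2 - 2 * α) * h x ^ (2 * α) * (ε + u x / h x) ^ α) ∧
    (1 / Real.Gamma (1 - α)) *
        deriv (fun s : ℝ => ∫ x in x₁..x₂, ∫ t in (-(u x / h x))..s,
          u x ^ (2 - 2 * α) * h x ^ (2 * α) * (t + u x / h x) ^ (2 * α) * (s - t) ^ (-α)) 0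
      = (Real.Gamma (2 * α + 1) / Real.Gamma (α + 1)) *
          ∫ x in x₁..x₂, u x ^ (2 - α) * h x ^ α := by
  set c : ℝ → ℝ := fun x => u x / h x with hcdef
  set w : ℝ → ℝ := fun x => u x ^ (2 - 2 * α) * h x ^ (2 * α) with hwdef
  set B : ℝ := Real.Gamma (2*α+1) * Real.Gamma (1-α) / Real.Gamma (α+2) with hBdef
  have hc_cont : ContinuousOn c (Set.Icc x₁ x₂) :=
    hu.div hh (fun x hx => (hhpos x hx).ne')
  have hc_pos : ∀ x ∈ Set.Icc x₁ x₂, 0 < c x :=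
    fun x hx => div_pos (hupos x hx) (hhpos x hx)
  have hw_cont : ContinuousOn w (Set.Icc x₁ x₂) :=
    (hu.rpow_const (fun x hx => Or.inl (hupos x hx).ne')).mul
      (hh.rpow_const (fun x hx => Or.inl (hhpos x hx).ne'))
  obtain ⟨y₀, hy₀, hmin⟩ := isCompact_Icc.exists_isMinOn (Set.nonempty_Icc.mpr h12) hc_cont
  set m : ℝ := c y₀ with hmdef
  have hm0 : 0 < m := hc_pos y₀ hy₀
  have hmle : ∀ x ∈ Set.Icc x₁ x₂, m ≤ c x := fun x hx => hmin hx
  -- the closed form of the inner integral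
  have hinner : ∀ s : ℝ, -m < s → ∀ x ∈ Set.Icc x₁ x₂,
      (∫ t in (-(u x / h x))..s,
        u x ^ (2 - 2 * α) * h x ^ (2 * α) * (t + u x / h x) ^ (2 * α) * (s - t) ^ (-α))
      = B * (w x * (s + c x) ^ (α+1)) := by
    intro s hs x hx
    have hsc : 0 < s + c x := by have := hmle x hx; linarith
    simp only [mul_assoc]
    rw [intervalIntegral.integral_const_mul, intervalIntegral.integral_const_mul]
    rw [show (fun t => (t + u x / h x) ^ (2*α) * (s - t) ^ (-α))
        = fun t => (t + c x) ^ (2*α) * (s - t) ^ (-α) from rfl]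
    rw [inner_int hα0 hα1 hsc]
    simp only [hwdef, hBdef]
    ring
  -- main derivative computation
  have main : ∀ ε : ℝ, 0 ≤ ε →
      HasDerivAt (fun s : ℝ => ∫ x in x₁..x₂, ∫ t in (-(u x / h x))..s,
          u x ^ (2 - 2 * α) * h x ^ (2 * α) * (t + u x / h x) ^ (2 * α) * (s - t) ^ (-α))
        (B * ((α+1) * ∫ x in x₁..x₂, w x * (ε + c x) ^ α)) ε := by
    intro ε hε
    have hG := (deriv_aux h12 hw_cont hc_cont hα0 ε).const_mul B
    apply hG.congr_of_eventuallyEq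
    have hev : ∀ᶠ s in nhds ε, -m < s := eventually_gt_nhds (by linarith)
    filter_upwards [hev] with s hs
    rw [← intervalIntegral.integral_const_mul]
    apply intervalIntegral.integral_congr
    intro x hx
    rw [Set.uIcc_of_le h12] at hx
    exact hinner s hs x hx
  -- arithmetic with Gamma values
  have hΓ2 : Real.Gamma (α+2) = (α+1) * Real.Gamma (α+1) := by
    rw [show α + 2 = (α+1) + 1 from by ring, Real.Gamma_add_one (by linarith)]
  have hΓ1α : Real.Gamma (1-α) ≠ 0 := (Real.Gamma_pos_of_pos (by linarith)).ne'
  have hΓα1 : Real.Gamma (α+1) ≠ 0 := (Real.Gamma_pos_of_pos (by linarith)).ne'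
  have harith : ∀ I : ℝ, (1 / Real.Gamma (1-α)) * (B * ((α+1) * I))
      = (Real.Gamma (2*α+1) / Real.Gamma (α+1)) * I := by
    intro I
    rw [hBdef, hΓ2]
    field_simp
  have key : ∀ ε : ℝ, 0 ≤ ε →
      DifferentiableAt ℝ
        (fun s : ℝ => ∫ x in x₁..x₂, ∫ t in (-(u x / h x))..s,
          u x ^ (2 - 2 * α) * h x ^ (2 * α) * (t + u x / h x) ^ (2 * α) * (s - t) ^ (-α)) ε ∧
      (1 / Real.Gamma (1 - α)) *
          deriv (fun s : ℝ => ∫ x in x₁..x₂, ∫ t in (-(u x / h x))..s,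
            u x ^ (2 - 2 * α) * h x ^ (2 * α) * (t + u x / h x) ^ (2 * α) * (s - t) ^ (-α)) ε
        = (Real.Gamma (2 * α + 1) / Real.Gamma (α + 1)) *
            ∫ x in x₁..x₂, w x * (ε + c x) ^ α := by
    intro ε hε
    refine ⟨(main ε hε).differentiableAt, ?_⟩
    rw [(main ε hε).deriv, harith]
  refine ⟨fun ε hε => ⟨(key ε hε).1, (key ε hε).2⟩, ?_⟩
  rw [(key 0 le_rfl).2]
  congr 1
  apply intervalIntegral.integral_congr
  intro x hx
  rw [Set.uIcc_of_le h12] at hx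
  have hux := hupos x hx
  have hhx := hhpos x hx
  have hhα : (0:ℝ) < h x ^ α := Real.rpow_pos_of_pos hhx α
  have e1 : u x ^ (2-α) = u x ^ (2-2*α) * u x ^ α := by
    rw [← Real.rpow_add hux]; ring_nf
  have e2 : h x ^ (2*α) = h x ^ α * h x ^ α := by
    rw [← Real.rpow_add hhx]; ring_nf
  simp only [hwdef, hcdef, zero_add]
  rw [Real.div_rpow hux.le hhx.le, e1, e2]
  field_simp
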